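/- If Ŝ is a matrix on C^{(m+1)n} satisfying Ŝ L_R = M_R for all R in C^{n×n}, with Ŝ vanishing on U^⊥ where U = span{L_R x}, and the families satisfy the skew relations M_{R'}* L_R = −L_{R'}* M_R and the intertwining L_{R'R} = (I_{m+1}⊗R')L_R, M_{R'R} = (I_{m+1}⊗R')M_R, then the compression of Ŝ to U is skew-Hermitian and commutes with (I_{m+1}⊗R)|_U for every R; consequently Ŝ can be modified on U^⊥ so that Ŝ = S ⊗ I_n for some skew-Hermitian S in C^{(m+1)×(m+1)} while still satisfying Ŝ L_R = M_R for all R. -/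

import Mathlib

open Matrix Kronecker

lemma mulVec_ext' {a b : Type*} [Fintype b] [DecidableEq b] (X Y : Matrix a b ℂ)
    (h : ∀ v, X *ᵥ v = Y *ᵥ v) : X = Y := by
  ext i j
  simpa [Matrix.mulVec_single] using congrFun (h (Pi.single j 1)) i

lemma dot_single {a : Type*} [Fintype a] [DecidableEq a] (w : a → ℂ) (i : a) :
    star (Pi.single i 1) ⬝ᵥ w = w i := by
  simp [dotProduct, Pi.single_apply, apply_ite, Finset.sum_ite_eq]

lemma dot_aux {a b : Type*} [Fintype a] [Fintype b] (B C : Matrix a b ℂ) (x y : b → ℂ) :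
    star (B *ᵥ x) ⬝ᵥ (C *ᵥ y) = star x ⬝ᵥ ((Bᴴ * C) *ᵥ y) := by
  rw [star_mulVec, ← Matrix.mulVec_mulVec, ← Matrix.dotProduct_mulVec]

lemma zero_of_forall_dot {a : Type*} [Fintype a] [DecidableEq a] (X : Matrix a a ℂ)
    (h : ∀ u v, star u ⬝ᵥ (X *ᵥ v) = 0) : X = 0 := by
  ext i j
  simpa [Matrix.mulVec_single, dot_single] using h (Pi.single i 1) (Pi.single j 1)

lemma one_kron_conjT {m n : ℕ} (R : Matrix (Fin n) (Fin n) ℂ) :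
    (((1 : Matrix (Fin (m+1)) (Fin (m+1)) ℂ) ⊗ₖ R))ᴴ
      = (1 : Matrix (Fin (m+1)) (Fin (m+1)) ℂ) ⊗ₖ Rᴴ := by
  ext ⟨i, a⟩ ⟨j, b⟩
  simp [Matrix.conjTranspose_apply, Matrix.kronecker_apply, Matrix.one_apply, eq_comm]
  aesop

lemma commutant {m n : ℕ} (hn : 0 < n)
    (A : Matrix (Fin (m+1) × Fin n) (Fin (m+1) × Fin n) ℂ)
    (h : ∀ R : Matrix (Fin n) (Fin n) ℂ,
      A * ((1 : Matrix (Fin (m+1)) (Fin (m+1)) ℂ) ⊗ₖ R)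
        = ((1 : Matrix (Fin (m+1)) (Fin (m+1)) ℂ) ⊗ₖ R) * A) :
    ∃ S : Matrix (Fin (m+1)) (Fin (m+1)) ℂ, A = S ⊗ₖ (1 : Matrix (Fin n) (Fin n) ℂ) := by
  have key : ∀ (k l : Fin n) (i : Fin (m+1)) (a : Fin n) (j : Fin (m+1)) (b : Fin n),
      (if l = b then A (i,a) (j,k) else 0) = (if k = a then A (i,l) (j,b) else 0) := by
    intro k l i a j b
    have := congrFun (congrFun (h (Matrix.single k l 1)) (i, a)) (j, b)
    simpa [Matrix.mul_apply, Matrix.kronecker_apply, Matrix.one_apply,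
      Matrix.single, Fintype.sum_prod_type, Finset.sum_ite_eq,
      Finset.sum_ite_eq', ite_and, mul_comm] using this
  set z : Fin n := ⟨0, hn⟩
  refine ⟨fun i j => A (i, z) (j, z), ?_⟩
  ext ⟨i, a⟩ ⟨j, b⟩
  show A (i, a) (j, b) = A (i, z) (j, z) * (1 : Matrix (Fin n) (Fin n) ℂ) a b
  rw [Matrix.one_apply]
  by_cases hab : a = b
  · subst hab
    have := key a z i a j z
    simpa using this
  · have := key b b i a j b
    simp [Ne.symm hab] at this ⊢
    simpa [hab] using this

set_option maxHeartbeats 1000000 in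
theorem stmt19 {n m : ℕ}
    (L M : Matrix (Fin n) (Fin n) ℂ → Matrix (Fin (m + 1) × Fin n) (Fin n) ℂ)
    (hskew : ∀ R R' : Matrix (Fin n) (Fin n) ℂ,
      (M R')ᴴ * L R = -((L R')ᴴ * M R))
    (hLint : ∀ R' R : Matrix (Fin n) (Fin n) ℂ,
      L (R' * R) = (((1 : Matrix (Fin (m + 1)) (Fin (m + 1)) ℂ) ⊗ₖ R')) * L R)
    (hMint : ∀ R' R : Matrix (Fin n) (Fin n) ℂ,
      M (R' * R) = (((1 : Matrix (Fin (m + 1)) (Fin (m + 1)) ℂ) ⊗ₖ R')) * M R)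
    (U : Submodule ℂ (Fin (m + 1) × Fin n → ℂ))
    (hU : U = Submodule.span ℂ
      {w | ∃ (R : Matrix (Fin n) (Fin n) ℂ) (x : Fin n → ℂ), w = (L R) *ᵥ x})
    (S' : Matrix (Fin (m + 1) × Fin n) (Fin (m + 1) × Fin n) ℂ)
    (hS' : ∀ R, S' * L R = M R)
    (hvanish : ∀ v : Fin (m + 1) × Fin n → ℂ,
      (∀ u ∈ U, star u ⬝ᵥ v = 0) → S' *ᵥ v = 0) :
    (∀ u ∈ U, ∀ v ∈ U,
      star u ⬝ᵥ (S' *ᵥ v) + star (S' *ᵥ u) ⬝ᵥ v = 0) ∧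
    (∀ (R : Matrix (Fin n) (Fin n) ℂ), ∀ v ∈ U,
      S' *ᵥ (((1 : Matrix (Fin (m + 1)) (Fin (m + 1)) ℂ) ⊗ₖ R) *ᵥ v) =
        ((1 : Matrix (Fin (m + 1)) (Fin (m + 1)) ℂ) ⊗ₖ R) *ᵥ (S' *ᵥ v)) ∧
    (∃ S : Matrix (Fin (m + 1)) (Fin (m + 1)) ℂ, Sᴴ = -S ∧
      (∀ v ∈ U, (S ⊗ₖ (1 : Matrix (Fin n) (Fin n) ℂ)) *ᵥ v = S' *ᵥ v) ∧
      ∀ R, (S ⊗ₖ (1 : Matrix (Fin n) (Fin n) ℂ)) * L R = M R) := by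
  subst hU
  set G : Set (Fin (m+1) × Fin n → ℂ) :=
    {w | ∃ (R : Matrix (Fin n) (Fin n) ℂ) (x : Fin n → ℂ), w = (L R) *ᵥ x} with hG
  set U := Submodule.span ℂ G with hU
  have hgen : ∀ (R : Matrix (Fin n) (Fin n) ℂ) x, L R *ᵥ x ∈ U :=
    fun R x => Submodule.subset_span ⟨R, x, rfl⟩
  have hUinv : ∀ (R : Matrix (Fin n) (Fin n) ℂ), ∀ v ∈ U,
      ((1 : Matrix (Fin (m + 1)) (Fin (m + 1)) ℂ) ⊗ₖ R) *ᵥ v ∈ U := by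
    intro R v hv
    induction hv using Submodule.span_induction with
    | mem w hw =>
      obtain ⟨R₀, x, rfl⟩ := hw
      rw [Matrix.mulVec_mulVec, ← hLint]
      exact hgen _ _
    | zero => simp
    | add x y hx hy ihx ihy => rw [Matrix.mulVec_add]; exact U.add_mem ihx ihy
    | smul c x hx ihx => rw [Matrix.mulVec_smul]; exact U.smul_mem c ihx
  have concl1 : ∀ u ∈ U, ∀ v ∈ U,
      star u ⬝ᵥ (S' *ᵥ v) + star (S' *ᵥ u) ⬝ᵥ v = 0 := by
    intro u hu v hv
    induction hu, hv using Submodule.span_induction₂ with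
    | mem_mem x y hx hy =>
      obtain ⟨R₁, a, rfl⟩ := hx
      obtain ⟨R₂, b, rfl⟩ := hy
      rw [Matrix.mulVec_mulVec, hS', dot_aux, Matrix.mulVec_mulVec, hS',
        dot_aux, ← dotProduct_add, ← Matrix.add_mulVec, hskew]
      simp
    | zero_left y hy => simp
    | zero_right x hx => simp
    | add_left x y z hx hy hz h1 h2 =>
      simp only [star_add, Matrix.mulVec_add, add_dotProduct,
        dotProduct_add]
      linear_combination h1 + h2
    | add_right x y z hx hy hz h1 h2 =>
      simp only [star_add, Matrix.mulVec_add, add_dotProduct,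
        dotProduct_add]
      linear_combination h1 + h2
    | smul_left c x y hx hy h1 =>
      rw [star_smul, Matrix.mulVec_smul, star_smul, smul_dotProduct,
        smul_dotProduct]
      simp only [smul_eq_mul, star_trivial, RCLike.star_def]
      linear_combination (starRingEnd ℂ c) * h1
    | smul_right c x y hx hy h1 =>
      rw [Matrix.mulVec_smul, dotProduct_smul, dotProduct_smul]
      simp only [smul_eq_mul]
      linear_combination c * h1
  have concl2 : ∀ (R : Matrix (Fin n) (Fin n) ℂ), ∀ v ∈ U,
      S' *ᵥ (((1 : Matrix (Fin (m + 1)) (Fin (m + 1)) ℂ) ⊗ₖ R) *ᵥ v) =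
        ((1 : Matrix (Fin (m + 1)) (Fin (m + 1)) ℂ) ⊗ₖ R) *ᵥ (S' *ᵥ v) := by
    intro R v hv
    induction hv using Submodule.span_induction with
    | mem w hw =>
      obtain ⟨R₀, x, rfl⟩ := hw
      have hq : ((1 : Matrix (Fin (m + 1)) (Fin (m + 1)) ℂ) ⊗ₖ R) *ᵥ (L R₀ *ᵥ x)
          = L (R * R₀) *ᵥ x := by rw [Matrix.mulVec_mulVec, ← hLint]
      rw [hq, Matrix.mulVec_mulVec, hS', hMint, ← Matrix.mulVec_mulVec,
        ← hS' R₀, ← Matrix.mulVec_mulVec]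
    | zero => simp
    | add x y hx hy ihx ihy => simp [Matrix.mulVec_add, ihx, ihy]
    | smul c x hx ihx => simp [Matrix.mulVec_smul, ihx]
  refine ⟨concl1, concl2, ?_⟩
  rcases Nat.eq_zero_or_pos n with h0 | hn
  · subst h0
    refine ⟨0, by simp, ?_, ?_⟩
    · intro v hv
      funext i
      exact i.2.elim0
    · intro R
      ext i j
      exact i.2.elim0
  -- main case : n > 0
  · let e := (WithLp.linearEquiv 2 ℂ (Fin (m+1) × Fin n → ℂ))
    let Ue : Submodule ℂ (EuclideanSpace ℂ (Fin (m+1) × Fin n)) := U.comap e.toLinearMap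
    have hUe : ∀ x : EuclideanSpace ℂ (Fin (m+1) × Fin n), (x ∈ Ue ↔ e x ∈ U) := fun x => Iff.rfl
    have hinner : ∀ u v : EuclideanSpace ℂ (Fin (m+1) × Fin n),
        (inner ℂ u v : ℂ) = star (e u) ⬝ᵥ e v := by
      intro u v
      simp [PiLp.inner_apply, RCLike.inner_apply, dotProduct, mul_comm]
      exact Finset.sum_congr rfl fun x _ => mul_comm _ _
    let Pl : EuclideanSpace ℂ (Fin (m+1) × Fin n) →ₗ[ℂ] EuclideanSpace ℂ (Fin (m+1) × Fin n) :=
      Ue.subtype ∘ₗ (Ue.orthogonalProjectionOnto).toLinearMap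
    let Pm : Matrix (Fin (m+1) × Fin n) (Fin (m+1) × Fin n) ℂ :=
      LinearMap.toMatrix' (e.toLinearMap ∘ₗ Pl ∘ₗ e.symm.toLinearMap)
    have hPm : ∀ v : Fin (m+1) × Fin n → ℂ, Pm *ᵥ v = e (Pl (e.symm v)) := by
      intro v
      have h1 : Matrix.toLin' Pm = e.toLinearMap ∘ₗ Pl ∘ₗ e.symm.toLinearMap :=
        Matrix.toLin'_toMatrix' _
      calc Pm *ᵥ v = Matrix.toLin' Pm v := (Matrix.toLin'_apply _ _).symm
      _ = e (Pl (e.symm v)) := by rw [h1]; rfl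
    have hPmem : ∀ v, Pm *ᵥ v ∈ U := by
      intro v; rw [hPm]; exact (hUe _).mp (Ue.orthogonalProjectionOnto (e.symm v)).2
    have hPid : ∀ v ∈ U, Pm *ᵥ v = v := by
      intro v hv; rw [hPm]
      rw [show Pl (e.symm v) = e.symm v from Submodule.starProjection_eq_self_iff.mpr
        ((hUe (e.symm v)).mpr (by rw [e.apply_symm_apply]; exact hv))]
      exact e.apply_symm_apply v
    have hPzero : ∀ v : Fin (m+1) × Fin n → ℂ,
        (∀ u ∈ U, star u ⬝ᵥ v = 0) → Pm *ᵥ v = 0 := by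
      intro v hv
      have hvo : e.symm v ∈ Ueᗮ := by
        rw [Submodule.mem_orthogonal]
        intro u hu
        rw [hinner, e.apply_symm_apply]
        exact hv _ hu
      have h2 : Ue.orthogonalProjectionOnto (e.symm v) = 0 :=
        Submodule.orthogonalProjectionOnto_apply_of_mem_orthogonal hvo
      rw [hPm]
      show e (Ue.subtype (Ue.orthogonalProjectionOnto (e.symm v))) = 0
      rw [h2]; simp
    have hPorth : ∀ (v : Fin (m+1) × Fin n → ℂ), ∀ u ∈ U,
        star u ⬝ᵥ (v - Pm *ᵥ v) = 0 := by
      intro v u hu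
      have h3 := Submodule.sub_starProjection_mem_orthogonal (K := Ue) (e.symm v)
      have h4 := (Submodule.mem_orthogonal _ _).mp h3 (e.symm u) ((hUe (e.symm u)).mpr hu)
      rw [hinner, map_sub, e.apply_symm_apply, e.apply_symm_apply] at h4
      rw [hPm]
      exact h4
    have hPH : Pmᴴ = Pm := by
      have hentry : ∀ i j, Pm i j =
          (inner ℂ (e.symm (Pi.single i 1)) (Pl (e.symm (Pi.single j 1))) : ℂ) := by
        intro i j
        have h5 : Pm i j = e (Pl (e.symm (Pi.single j 1))) i := by
          have h6 : (fun j' => if j' = j then (1:ℂ) else 0) = Pi.single j 1 := by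
            funext k; simp [Pi.single_apply]
          show LinearMap.toMatrix' (e.toLinearMap ∘ₗ Pl ∘ₗ e.symm.toLinearMap) i j
            = e (Pl (e.symm (Pi.single j 1))) i
          rw [LinearMap.toMatrix'_apply]
          rfl
        rw [h5, hinner, e.apply_symm_apply]
        exact (dot_single _ i).symm
      ext i j
      have h1 := hentry i j
      have h2 := hentry j i
      calc Pmᴴ i j = star (Pm j i) := rfl
      _ = star (inner ℂ (e.symm (Pi.single j 1)) (Pl (e.symm (Pi.single i 1))) : ℂ) := by rw [h2]
      _ = (inner ℂ (Pl (e.symm (Pi.single i 1))) (e.symm (Pi.single j 1)) : ℂ) :=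
          inner_conj_symm _ _
      _ = (inner ℂ (e.symm (Pi.single i 1)) (Pl (e.symm (Pi.single j 1))) : ℂ) :=
          Submodule.inner_starProjection_left_eq_right (K := Ue) _ _
      _ = Pm i j := h1.symm
    clear_value Pm
    -- commutation of Pm with 1 ⊗ R
    have hPcommv : ∀ (R : Matrix (Fin n) (Fin n) ℂ) (v : Fin (m+1) × Fin n → ℂ),
        Pm *ᵥ (((1 : Matrix (Fin (m+1)) (Fin (m+1)) ℂ) ⊗ₖ R) *ᵥ v)
          = ((1 : Matrix (Fin (m+1)) (Fin (m+1)) ℂ) ⊗ₖ R) *ᵥ (Pm *ᵥ v) := by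
      intro R v
      set Q := ((1 : Matrix (Fin (m+1)) (Fin (m+1)) ℂ) ⊗ₖ R) with hQ
      have hsplit : Q *ᵥ v = Q *ᵥ (Pm *ᵥ v) + Q *ᵥ (v - Pm *ᵥ v) := by
        rw [← Matrix.mulVec_add, add_sub_cancel]
      rw [hsplit, Matrix.mulVec_add]
      have h1 : Pm *ᵥ (Q *ᵥ (Pm *ᵥ v)) = Q *ᵥ (Pm *ᵥ v) := hPid _ (hUinv R _ (hPmem v))
      have h2 : Pm *ᵥ (Q *ᵥ (v - Pm *ᵥ v)) = 0 := by
        apply hPzero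
        intro u hu
        have hst : star u ᵥ* Q
            = star (((1 : Matrix (Fin (m+1)) (Fin (m+1)) ℂ) ⊗ₖ Rᴴ) *ᵥ u) := by
          rw [star_mulVec, one_kron_conjT, conjTranspose_conjTranspose]
        rw [Matrix.dotProduct_mulVec, hst]
        exact hPorth v _ (hUinv Rᴴ u hu)
      rw [h1, h2, add_zero]
    have hPcomm : ∀ (R : Matrix (Fin n) (Fin n) ℂ),
        Pm * ((1 : Matrix (Fin (m+1)) (Fin (m+1)) ℂ) ⊗ₖ R)
          = ((1 : Matrix (Fin (m+1)) (Fin (m+1)) ℂ) ⊗ₖ R) * Pm := by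
      intro R
      apply mulVec_ext'
      intro v
      rw [← Matrix.mulVec_mulVec, ← Matrix.mulVec_mulVec]
      exact hPcommv R v
    have hScomm : ∀ (R : Matrix (Fin n) (Fin n) ℂ),
        (S' * Pm) * ((1 : Matrix (Fin (m+1)) (Fin (m+1)) ℂ) ⊗ₖ R)
          = ((1 : Matrix (Fin (m+1)) (Fin (m+1)) ℂ) ⊗ₖ R) * (S' * Pm) := by
      intro R
      apply mulVec_ext'
      intro v
      rw [← Matrix.mulVec_mulVec, ← Matrix.mulVec_mulVec, ← Matrix.mulVec_mulVec,
        ← Matrix.mulVec_mulVec, hPcommv]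
      exact concl2 R _ (hPmem v)
    have hBcomm : ∀ (R : Matrix (Fin n) (Fin n) ℂ),
        (Pm * S'ᴴ) * ((1 : Matrix (Fin (m+1)) (Fin (m+1)) ℂ) ⊗ₖ R)
          = ((1 : Matrix (Fin (m+1)) (Fin (m+1)) ℂ) ⊗ₖ R) * (Pm * S'ᴴ) := by
      intro R
      have h1 := congrArg Matrix.conjTranspose (hScomm Rᴴ)
      simp only [Matrix.conjTranspose_mul, one_kron_conjT,
        Matrix.conjTranspose_conjTranspose, hPH] at h1
      exact h1.symm
    -- skewness of Pm (S' + S'ᴴ) Pm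
    have hX : Pm * (S' * Pm) + (S' * Pm)ᴴ * Pm = 0 := by
      apply zero_of_forall_dot
      intro u v
      have hc := concl1 (Pm *ᵥ u) (hPmem u) (Pm *ᵥ v) (hPmem v)
      rw [Matrix.mulVec_mulVec, Matrix.mulVec_mulVec, dot_aux, dot_aux, hPH,
        ← dotProduct_add, ← Matrix.add_mulVec] at hc
      exact hc
    have hPSP : Pm * (S' * Pm) = -((Pm * S'ᴴ) * Pm) := by
      have h7 : (S' * Pm)ᴴ * Pm = (Pm * S'ᴴ) * Pm := by
        rw [Matrix.conjTranspose_mul, hPH]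
      rw [h7] at hX
      exact eq_neg_of_add_eq_zero_left hX
    set A : Matrix (Fin (m+1) × Fin n) (Fin (m+1) × Fin n) ℂ :=
      S' * Pm - Pm * S'ᴴ + Pm * S'ᴴ * Pm with hAdef
    have hAH : Aᴴ = -A := by
      rw [hAdef]
      simp only [Matrix.conjTranspose_add, Matrix.conjTranspose_sub,
        Matrix.conjTranspose_mul, Matrix.conjTranspose_conjTranspose, hPH]
      rw [hPSP]
      abel
    have hAcomm : ∀ (R : Matrix (Fin n) (Fin n) ℂ),
        A * ((1 : Matrix (Fin (m+1)) (Fin (m+1)) ℂ) ⊗ₖ R)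
          = ((1 : Matrix (Fin (m+1)) (Fin (m+1)) ℂ) ⊗ₖ R) * A := by
      intro R
      set Q := ((1 : Matrix (Fin (m+1)) (Fin (m+1)) ℂ) ⊗ₖ R) with hQ
      have h3 : (Pm * S'ᴴ * Pm) * Q = Q * (Pm * S'ᴴ * Pm) := by
        rw [Matrix.mul_assoc (Pm * S'ᴴ) Pm Q, hPcomm, ← Matrix.mul_assoc, hBcomm,
          Matrix.mul_assoc]
      rw [hAdef, Matrix.add_mul, Matrix.sub_mul, Matrix.mul_add, Matrix.mul_sub,
        hScomm, hBcomm, h3]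
    have hAU : ∀ v ∈ U, A *ᵥ v = S' *ᵥ v := by
      intro v hv
      rw [hAdef, Matrix.add_mulVec, Matrix.sub_mulVec]
      have e1 : (S' * Pm) *ᵥ v = S' *ᵥ v := by
        rw [← Matrix.mulVec_mulVec, hPid v hv]
      have e2 : (Pm * S'ᴴ * Pm) *ᵥ v = (Pm * S'ᴴ) *ᵥ v := by
        rw [← Matrix.mulVec_mulVec, hPid v hv]
      rw [e1, e2]
      abel
    obtain ⟨S, hSA⟩ := commutant hn A hAcomm
    have hSapp : ∀ i j, S i j = A (i, ⟨0, hn⟩) (j, ⟨0, hn⟩) := by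
      intro i j
      rw [hSA]
      simp [Matrix.kronecker_apply]
    refine ⟨S, ?_, ?_, ?_⟩
    · ext i j
      have h2 : Sᴴ i j = star (A (j, ⟨0, hn⟩) (i, ⟨0, hn⟩)) := by
        rw [Matrix.conjTranspose_apply, hSapp]
      rw [h2]
      have h3 : star (A (j, ⟨0, hn⟩) (i, ⟨0, hn⟩)) = Aᴴ (i, ⟨0, hn⟩) (j, ⟨0, hn⟩) := rfl
      rw [h3, hAH, Matrix.neg_apply, Matrix.neg_apply, hSapp]
    · intro v hv
      rw [← hSA]
      exact hAU v hv
    · intro R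
      apply mulVec_ext'
      intro x
      rw [← Matrix.mulVec_mulVec, ← hSA, hAU _ (hgen R x), Matrix.mulVec_mulVec, hS']
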